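/- Let (S, d_S) be a compact metric space, U the closed unit ball of ℝ^d, and h : S × U → ℝ^d a continuous function such that for every s ∈ S the set G(s) := h(s,U) = {h(s,u) : u ∈ U} is a convex and compact subset of ℝ^d. Then for every Borel probability measure μ on S, the Aumann integral of G satisfies ∫_S G(s) μ(ds) = { ∫_{S×U} h(s,u) ν(ds,du) : ν a Borel probability measure on S × U whose marginal on S equals μ }. -/

import Mathlib

open Filter Topology MeasureTheory

abbrev Euc (d : ℕ) := EuclideanSpace ℝ (Fin d)
open scoped ENNReal

/-- The set of parameters where the fiber meets a closed ball is measurable. -/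
lemma phi_measurable {S K E : Type*} [TopologicalSpace S] [MeasurableSpace S]
    [OpensMeasurableSpace S] [MetricSpace K] [CompactSpace K]
    [SecondCountableTopology K] [MetricSpace E] [MeasurableSpace E]
    [BorelSpace E] [SecondCountableTopology E]
    (h : S → K → E) (hc : Continuous fun p : S × K => h p.1 p.2)
    (f : S → E) (hf : Measurable f) (k : K) (rr : ℝ) (hrr : 0 ≤ rr) :
    MeasurableSet {s | ∃ u : K, dist u k ≤ rr ∧ h s u = f s} := by
  classical
  set K0 : Set K := Metric.closedBall k rr with hK0def
  have hK0c : IsCompact K0 := Metric.isClosed_closedBall.isCompact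
  have hK0ne : K0.Nonempty := ⟨k, Metric.mem_closedBall_self hrr⟩
  haveI : Nonempty K0 := hK0ne.to_subtype
  -- dense sequence in K0
  obtain ⟨t, ht⟩ : ∃ t : ℕ → K0, DenseRange t := ⟨TopologicalSpace.denseSeq K0,
    TopologicalSpace.denseRange_denseSeq K0⟩
  have hcs : ∀ s : S, Continuous (h s) := fun s =>
    hc.comp (Continuous.prodMk_right s)
  have key : ∀ s, (∃ u : K, dist u k ≤ rr ∧ h s u = f s) ↔
      (⨅ n, edist (f s) (h s (t n))) = 0 := by
    intro s
    have hA : Set.range (fun n => h s ((t n : K))) ⊆ h s '' K0 := by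
      rintro x ⟨n, rfl⟩; exact ⟨(t n : K), (t n).2, rfl⟩
    have himg : IsCompact (h s '' K0) := hK0c.image (hcs s)
    have hclose : closure (Set.range fun n => h s ((t n : K))) = h s '' K0 := by
      apply Set.Subset.antisymm
      · exact himg.isClosed.closure_subset_iff.mpr hA
      · -- K0 ⊆ closure (val '' range t)
        have h1 : K0 ⊆ closure (Subtype.val '' Set.range t) := by
          intro x hx
          have : (⟨x, hx⟩ : K0) ∈ closure (Set.range t) := ht _
          have := (continuous_subtype_val.continuousAt (x := (⟨x, hx⟩ : K0)))
          have hmem : (⟨x, hx⟩ : K0) ∈ closure (Set.range t) := ht _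
          have : (x : K) ∈ Subtype.val '' closure (Set.range t) := ⟨_, hmem, rfl⟩
          exact (image_closure_subset_closure_image continuous_subtype_val) this
        calc h s '' K0 ⊆ h s '' closure (Subtype.val '' Set.range t) := Set.image_mono h1
          _ ⊆ closure (h s '' (Subtype.val '' Set.range t)) :=
              image_closure_subset_closure_image (hcs s)
          _ = closure (Set.range fun n => h s ((t n : K))) := by
              rw [← Set.range_comp, ← Set.range_comp]; rfl
    constructor
    · rintro ⟨u, hu, hhu⟩
      have : f s ∈ h s '' K0 := ⟨u, by simpa [hK0def] using hu, hhu⟩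
      rw [← hclose, EMetric.mem_closure_iff_infEdist_zero] at this
      rwa [Metric.infEDist, iInf_range] at this
    · intro h0
      have : f s ∈ closure (Set.range fun n => h s ((t n : K))) := by
        rw [EMetric.mem_closure_iff_infEdist_zero, Metric.infEDist, iInf_range]
        exact h0
      rw [hclose] at this
      obtain ⟨u, hu, hhu⟩ := this
      exact ⟨u, by simpa [hK0def] using hu, hhu⟩
  have : {s | ∃ u : K, dist u k ≤ rr ∧ h s u = f s}
      = (fun s => ⨅ n, edist (f s) (h s (t n))) ⁻¹' {0} := by
    ext s; simpa using key s
  rw [this]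
  have hmeas : Measurable fun s => ⨅ n, edist (f s) (h s (t n)) := by
    apply Measurable.iInf
    intro n
    exact hf.edist ((hc.comp (continuous_id.prodMk continuous_const)).measurable)
  exact hmeas (measurableSet_singleton 0)

/-- Measurable selection: if `f s` always lies in the compact set `h s '' univ`,
there is a measurable `g` with `h s (g s) = f s`. -/
lemma exists_measurable_selection {S K E : Type*} [TopologicalSpace S] [MeasurableSpace S]
    [OpensMeasurableSpace S] [MetricSpace K] [CompactSpace K] [Nonempty K]
    [SecondCountableTopology K] [MeasurableSpace K] [BorelSpace K]
    [MetricSpace E] [MeasurableSpace E]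
    [BorelSpace E] [SecondCountableTopology E]
    (h : S → K → E) (hc : Continuous fun p : S × K => h p.1 p.2)
    (f : S → E) (hf : Measurable f) (hfib : ∀ s, ∃ u : K, h s u = f s) :
    ∃ g : S → K, Measurable g ∧ ∀ s, h s (g s) = f s := by
  classical
  obtain ⟨D, hD⟩ : ∃ D : ℕ → K, DenseRange D := ⟨TopologicalSpace.denseSeq K,
    TopologicalSpace.denseRange_denseSeq K⟩
  -- a uniform bound on distances in compact K
  obtain ⟨R, hR0, hR⟩ : ∃ R : ℝ, 0 ≤ R ∧ ∀ u : K, dist u (D 0) ≤ R := by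
    obtain ⟨R, hR⟩ := (isCompact_univ (X := K)).isBounded.subset_closedBall (D 0)
    exact ⟨max R 0, le_max_right _ _, fun u => le_trans
      (by simpa using hR (Set.mem_univ u)) (le_max_left _ _)⟩
  set ρ : ℕ → ℝ := fun n => (R + 1) * (1/2) ^ n with hρdef
  have hρpos : ∀ n, 0 < ρ n := fun n => by positivity
  -- the step
  have step : ∀ (n : ℕ) (c : S → K), Measurable c → (∀ s, ∃ u : K, dist u (c s) ≤ ρ n ∧ h s u = f s) →
      ∃ c' : S → K, Measurable c' ∧ (∀ s, ∃ u : K, dist u (c' s) ≤ ρ (n+1) ∧ h s u = f s) ∧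
        ∀ s, dist (c' s) (c s) ≤ ρ n + ρ (n+1) := by
    intro n c hcm hinv
    set P : ℕ → S → Prop := fun k s =>
      dist (D k) (c s) ≤ ρ n + ρ (n+1) ∧ ∃ u : K, dist u (D k) ≤ ρ (n+1) ∧ h s u = f s with hP
    have hex : ∀ s, ∃ k, P k s := by
      intro s
      obtain ⟨u, hu1, hu2⟩ := hinv s
      obtain ⟨k, hk⟩ : ∃ k, dist (D k) u < ρ (n+1) := by
        have := Metric.denseRange_iff.mp hD u (ρ (n+1)) (hρpos _)
        obtain ⟨k, hk⟩ := this
        exact ⟨k, by rwa [dist_comm]⟩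
      refine ⟨k, ?_, u, ?_, hu2⟩
      · calc dist (D k) (c s) ≤ dist (D k) u + dist u (c s) := dist_triangle _ _ _
          _ ≤ ρ (n+1) + ρ n := add_le_add hk.le hu1
          _ = ρ n + ρ (n+1) := add_comm _ _
      · rw [dist_comm]; exact hk.le
    have hPm : ∀ k, MeasurableSet {s | P k s} := by
      intro k
      have h1 : MeasurableSet {s | dist (D k) (c s) ≤ ρ n + ρ (n+1)} := by
        have : Measurable fun s => dist (D k) (c s) :=
          (continuous_const.dist continuous_id).measurable.comp hcm
        exact this measurableSet_Iic
      have h2 := phi_measurable h hc f hf (D k) (ρ (n+1)) (hρpos _).le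
      exact (h1.inter h2 : _)
    refine ⟨fun s => D (Nat.find (hex s)), ?_, ?_, ?_⟩
    · exact Measurable.find (fun k => measurable_const) hPm hex
    · intro s; exact (Nat.find_spec (hex s)).2
    · intro s; exact (Nat.find_spec (hex s)).1
  -- the chain of approximations
  let Sub : ℕ → Type _ := fun n =>
    {c : S → K // Measurable c ∧ ∀ s, ∃ u : K, dist u (c s) ≤ ρ n ∧ h s u = f s}
  have base : Sub 0 := ⟨fun _ => D 0, measurable_const, fun s => by
    obtain ⟨u, hu⟩ := hfib s
    exact ⟨u, le_trans (hR u) (by simp [hρdef]), hu⟩⟩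
  let stepFun : ∀ n, Sub n → Sub (n+1) := fun n x =>
    ⟨(step n x.1 x.2.1 x.2.2).choose, (step n x.1 x.2.1 x.2.2).choose_spec.1,
      (step n x.1 x.2.1 x.2.2).choose_spec.2.1⟩
  let cseq : ∀ n, Sub n := fun n => Nat.rec base stepFun n
  have hlink : ∀ n s, dist ((cseq (n+1)).1 s) ((cseq n).1 s) ≤ ρ n + ρ (n+1) := by
    intro n s
    exact (step n (cseq n).1 (cseq n).2.1 (cseq n).2.2).choose_spec.2.2 s
  -- Cauchy
  have hcauchy : ∀ s, CauchySeq (fun n => (cseq n).1 s) := by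
    intro s
    apply cauchySeq_of_le_geometric (1/2) (3 * (R + 1)) (by norm_num)
    intro n
    rw [dist_comm]
    calc dist ((cseq (n+1)).1 s) ((cseq n).1 s) ≤ ρ n + ρ (n+1) := hlink n s
      _ = 3 * (R + 1) * (1/2) ^ (n+1) := by rw [hρdef]; ring
      _ ≤ 3 * (R + 1) * (1/2) ^ n := by
          apply mul_le_mul_of_nonneg_left _ (by positivity)
          apply pow_le_pow_of_le_one (by norm_num) (by norm_num) (Nat.le_succ n)
  have hlim : ∀ s, ∃ l : K, Tendsto (fun n => (cseq n).1 s) atTop (𝓝 l) := fun s =>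
    cauchySeq_tendsto_of_complete (hcauchy s)
  set g : S → K := fun s => (hlim s).choose with hg
  have hgt : ∀ s, Tendsto (fun n => (cseq n).1 s) atTop (𝓝 (g s)) := fun s => (hlim s).choose_spec
  refine ⟨g, ?_, ?_⟩
  · exact measurable_of_tendsto_metrizable (fun n => (cseq n).2.1)
      (tendsto_pi_nhds.mpr hgt)
  · intro s
    -- the fiber is closed, and g s is a limit of points at distance ≤ ρ n from the fiber
    have hfib_closed : IsClosed {u : K | h s u = f s} := by
      have : Continuous (h s) := hc.comp (Continuous.prodMk_right s)
      exact isClosed_eq this continuous_const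
    choose u hu1 hu2 using fun n => (cseq n).2.2 s
    have hut : Tendsto u atTop (𝓝 (g s)) := by
      rw [tendsto_iff_dist_tendsto_zero]
      have hb : ∀ n, dist (u n) (g s) ≤ ρ n + dist ((cseq n).1 s) (g s) := by
        intro n
        calc dist (u n) (g s) ≤ dist (u n) ((cseq n).1 s) + dist ((cseq n).1 s) (g s) :=
            dist_triangle _ _ _
          _ ≤ ρ n + dist ((cseq n).1 s) (g s) := by gcongr; exact hu1 n
      have hρ0 : Tendsto ρ atTop (𝓝 0) := by
        rw [hρdef]
        simpa using (tendsto_pow_atTop_nhds_zero_of_lt_one (by norm_num : (0:ℝ) ≤ 1/2)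
          (by norm_num : (1:ℝ)/2 < 1)).const_mul (R + 1)
      have hd0 : Tendsto (fun n => dist ((cseq n).1 s) (g s)) atTop (𝓝 0) :=
        tendsto_iff_dist_tendsto_zero.mp (hgt s)
      have : Tendsto (fun n => ρ n + dist ((cseq n).1 s) (g s)) atTop (𝓝 0) := by
        simpa using hρ0.add hd0
      exact squeeze_zero (fun n => dist_nonneg) hb this
    have : g s ∈ {u : K | h s u = f s} :=
      hfib_closed.mem_of_tendsto hut (Eventually.of_forall hu2)
    exact this

/-- characterization of the Aumann integral of a parametrized set-valued
map `G(s) = h(s,U)` in terms of probability measures on `S × U` with prescribed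
marginal on `S`. -/
theorem stmt_6 {d : ℕ} {S : Type*} [MetricSpace S] [CompactSpace S]
    [MeasurableSpace S] [BorelSpace S]
    (h : S → (Metric.closedBall (0 : Euc d) 1) → Euc d)
    (hc : Continuous (fun p : S × (Metric.closedBall (0 : Euc d) 1) => h p.1 p.2))
    (hval : ∀ s : S, Convex ℝ (Set.range (h s)) ∧ IsCompact (Set.range (h s)))
    (μ : Measure S) [IsProbabilityMeasure μ] :
    {z : Euc d | ∃ f : S → Euc d, Measurable f ∧ Integrable f μ ∧
      (∀ s, f s ∈ Set.range (h s)) ∧ z = ∫ s, f s ∂μ} =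
    {z : Euc d | ∃ ν : Measure (S × (Metric.closedBall (0 : Euc d) 1)),
      IsProbabilityMeasure ν ∧ ν.map Prod.fst = μ ∧ z = ∫ p, h p.1 p.2 ∂ν} := by
  classical
  haveI : CompactSpace (Metric.closedBall (0 : Euc d) 1) :=
    isCompact_iff_compactSpace.mp (isCompact_closedBall _ _)
  haveI : Nonempty (Metric.closedBall (0 : Euc d) 1) :=
    ⟨⟨0, Metric.mem_closedBall_self zero_le_one⟩⟩
  -- a uniform bound on ‖h‖
  obtain ⟨C, hC⟩ : ∃ C : ℝ, ∀ (s : S) (u : Metric.closedBall (0 : Euc d) 1), ‖h s u‖ ≤ C := by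
    obtain ⟨C, hC⟩ := (isCompact_range hc).isBounded.exists_norm_le
    exact ⟨C, fun s u => hC _ ⟨(s, u), rfl⟩⟩
  ext z
  simp only [Set.mem_setOf_eq]
  constructor
  · rintro ⟨f, hfm, hfi, hmem, rfl⟩
    obtain ⟨g, hgm, hgs⟩ := exists_measurable_selection h hc f hfm (fun s => hmem s)
    have hemb : Measurable fun s => (s, g s) := measurable_id.prodMk hgm
    refine ⟨μ.map (fun s => (s, g s)), Measure.isProbabilityMeasure_map hemb.aemeasurable, ?_, ?_⟩
    · rw [Measure.map_map measurable_fst hemb]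
      simp [Function.comp_def, Measure.map_id]
    · rw [integral_map hemb.aemeasurable hc.aestronglyMeasurable]
      exact integral_congr_ae (Filter.Eventually.of_forall fun s => (hgs s).symm)
  · rintro ⟨ν, hνp, hνm, rfl⟩
    have hνfst : ν.fst = μ := hνm
    have hcont_s : ∀ s, Continuous (h s) := fun s => hc.comp (Continuous.prodMk_right s)
    set κ := ν.condKernel with hκ
    set f : S → Euc d := fun s => ∫ u, h s u ∂(κ s) with hf
    have hint_k : ∀ s, Integrable (fun u => h s u) (κ s) := fun s =>
      (hcont_s s).integrable_of_hasCompactSupport ((isClosed_tsupport _).isCompact)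
    have hfm : Measurable f :=
      (StronglyMeasurable.integral_kernel_prod_right' (κ := κ)
        hc.stronglyMeasurable).measurable
    have hfb : ∀ s, ‖f s‖ ≤ C := by
      intro s
      calc ‖f s‖ ≤ C * ((κ s) Set.univ).toReal :=
          norm_integral_le_of_norm_le_const (Filter.Eventually.of_forall fun u => hC s u)
        _ = C := by simp
    refine ⟨f, hfm, ⟨hfm.aestronglyMeasurable,
        HasFiniteIntegral.of_bounded (Filter.Eventually.of_forall hfb)⟩, ?_, ?_⟩
    · intro s
      exact (hval s).1.integral_mem (hval s).2.isClosed
        (Filter.Eventually.of_forall fun u => Set.mem_range_self u) (hint_k s)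
    · have hint : Integrable (fun p : S × (Metric.closedBall (0 : Euc d) 1) => h p.1 p.2) ν :=
        hc.integrable_of_hasCompactSupport ((isClosed_tsupport _).isCompact)
      rw [← hνfst]
      exact (Measure.integral_condKernel hint).symm
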